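/- Let V be a finite-dimensional vector space over a field F, let E ⊆ V be a subspace, and let P = {g ∈ GL(V) : g(E) = E} be its stabilizer. Then two k-dimensional subspaces L, L′ ⊆ V lie in the same P-orbit if and only if dim(L ∩ E) = dim(L′ ∩ E). -/

import Mathlib

open Submodule Module

section aux

variable {F : Type*} [Field F] {V V' : Type*} [AddCommGroup V] [Module F V]
  [AddCommGroup V'] [Module F V']

/-- Glue two equivalences along complementary decompositions. -/
theorem glue_equiv (p q : Submodule F V) (p' q' : Submodule F V')
    (h : IsCompl p q) (h' : IsCompl p' q') (ep : p ≃ₗ[F] p') (eq' : q ≃ₗ[F] q') :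
    ∃ g : V ≃ₗ[F] V', (∀ x : p, g x = ep x) ∧ (∀ y : q, g y = eq' y) := by
  refine ⟨(Submodule.prodEquivOfIsCompl p q h).symm ≪≫ₗ (LinearEquiv.prodCongr ep eq') ≪≫ₗ
    Submodule.prodEquivOfIsCompl p' q' h', fun x => ?_, fun y => ?_⟩
  · simp [Submodule.prodEquivOfIsCompl_symm_apply_left p q h x,
      Submodule.coe_prodEquivOfIsCompl']
  · simp [Submodule.prodEquivOfIsCompl_symm_apply_right p q h y,
      Submodule.coe_prodEquivOfIsCompl']

/-- If `g` agrees with `ep : p ≃ p'` on `p`, then the image of a submodule `s ≤ p` is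
computed inside `p'`. -/
theorem map_of_comm (g : V ≃ₗ[F] V') {p : Submodule F V} {p' : Submodule F V'}
    (ep : p ≃ₗ[F] p') (hcomm : ∀ x : p, g x = ep x) (s : Submodule F V) (hs : s ≤ p) :
    Submodule.map (g : V →ₗ[F] V') s =
      Submodule.map p'.subtype (Submodule.map (ep : p →ₗ[F] p') (s.comap p.subtype)) := by
  have h1 : s = Submodule.map p.subtype (s.comap p.subtype) := by
    rw [Submodule.map_comap_subtype, inf_eq_right.2 hs]
  have h2 : (g : V →ₗ[F] V') ∘ₗ p.subtype = p'.subtype ∘ₗ (ep : p →ₗ[F] p') := by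
    ext x; exact hcomm x
  conv_lhs => rw [h1]
  rw [← Submodule.map_comp, h2, Submodule.map_comp]

/-- If `g` agrees with `ep : p ≃ p'` on `p`, then `g` maps `p` onto `p'`. -/
theorem map_of_comm_self (g : V ≃ₗ[F] V') {p : Submodule F V} {p' : Submodule F V'}
    (ep : p ≃ₗ[F] p') (hcomm : ∀ x : p, g x = ep x) :
    Submodule.map (g : V →ₗ[F] V') p = p' := by
  rw [map_of_comm g ep hcomm p le_rfl, Submodule.comap_subtype_self, Submodule.map_top,
    LinearEquiv.range, Submodule.map_top, Submodule.range_subtype]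

/-- A complement of `a` inside `e`, where `a ≤ e`. -/
theorem exists_compl_le (a e : Submodule F V) (hae : a ≤ e) :
    ∃ d : Submodule F V, d ≤ e ∧ d ⊓ a = ⊥ ∧ d ⊔ a = e := by
  obtain ⟨dd, hdd⟩ := Submodule.exists_isCompl (a.comap e.subtype)
  have ha : Submodule.map e.subtype (a.comap e.subtype) = a := by
    rw [Submodule.map_comap_subtype, inf_eq_right.2 hae]
  refine ⟨Submodule.map e.subtype dd, Submodule.map_subtype_le e dd, ?_, ?_⟩
  · rw [← ha, ← Submodule.map_inf e.subtype e.injective_subtype, hdd.symm.inf_eq_bot,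
      Submodule.map_bot]
  · rw [← ha, ← Submodule.map_sup, hdd.symm.sup_eq_top, Submodule.map_top,
      Submodule.range_subtype]

theorem finrank_comap_subtype {p q : Submodule F V} (h : p ≤ q) :
    Module.finrank F (p.comap q.subtype) = Module.finrank F p :=
  (Submodule.comapSubtypeEquivOfLe h).finrank_eq

end aux

set_option maxSynthPendingDepth 3 in
set_option synthInstance.maxHeartbeats 1000000 in
set_option maxHeartbeats 2000000 in
/-- Let `V` be a finite-dimensional vector space over `F`, `E ⊆ V` a subspace and
`P = {g ∈ GL(V) : g E = E}` its stabilizer. Two `k`-dimensional subspaces `L, L'` lie in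
the same `P`-orbit iff `dim (L ∩ E) = dim (L' ∩ E)`. -/
theorem stmt7 (F : Type*) [Field F] (V : Type*) [AddCommGroup V] [Module F V]
    [FiniteDimensional F V] (E L L' : Submodule F V) (k : ℕ)
    (hL : Module.finrank F L = k) (hL' : Module.finrank F L' = k) :
    (∃ g : V ≃ₗ[F] V, Submodule.map (g : V →ₗ[F] V) E = E ∧
        Submodule.map (g : V →ₗ[F] V) L = L') ↔
      Module.finrank F ↥(L ⊓ E) = Module.finrank F ↥(L' ⊓ E) := by
  constructor
  · rintro ⟨g, hgE, hgL⟩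
    have : Submodule.map (g : V →ₗ[F] V) (L ⊓ E) = L' ⊓ E := by
      rw [Submodule.map_inf (g : V →ₗ[F] V) g.injective, hgE, hgL]
    rw [← this, LinearEquiv.finrank_map_eq]
  · intro hd
    -- Notation: U = L ⊔ E, etc.
    set U : Submodule F V := L ⊔ E with hU
    set U' : Submodule F V := L' ⊔ E with hU'
    have hLU : L ≤ U := le_sup_left
    have hEU : E ≤ U := le_sup_right
    have hLU' : L' ≤ U' := le_sup_left
    have hEU' : E ≤ U' := le_sup_right
    have hAU : L ⊓ E ≤ U := inf_le_left.trans hLU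
    have hAU' : L' ⊓ E ≤ U' := inf_le_left.trans hLU'
    -- subspaces of U
    set Lt : Submodule F U := L.comap U.subtype with hLt
    set Et : Submodule F U := E.comap U.subtype with hEt
    set At : Submodule F U := (L ⊓ E).comap U.subtype with hAt
    set Lt' : Submodule F U' := L'.comap U'.subtype with hLt'
    set Et' : Submodule F U' := E.comap U'.subtype with hEt'
    set At' : Submodule F U' := (L' ⊓ E).comap U'.subtype with hAt'
    have hAtLt : At ≤ Lt := Submodule.comap_mono inf_le_left
    have hAtEt : At ≤ Et := Submodule.comap_mono inf_le_right
    have hAtLt' : At' ≤ Lt' := Submodule.comap_mono inf_le_left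
    have hAtEt' : At' ≤ Et' := Submodule.comap_mono inf_le_right
    -- injectivity of subtype maps for the lattice trick
    have injU : Function.Injective U.subtype := Subtype.val_injective
    have injU' : Function.Injective U'.subtype := Subtype.val_injective
    -- AL = A viewed inside L-tilde
    set AL : Submodule F Lt := At.comap Lt.subtype with hAL
    set AL' : Submodule F Lt' := At'.comap Lt'.subtype with hAL'
    -- block equivalence on A
    have frA : Module.finrank F AL = Module.finrank F AL' := by
      rw [hAL, hAL', finrank_comap_subtype hAtLt, finrank_comap_subtype hAtLt',
        hAt, hAt', finrank_comap_subtype hAU, finrank_comap_subtype hAU', hd]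
    -- C : complement of AL in Lt
    obtain ⟨C, hC⟩ := Submodule.exists_isCompl AL
    obtain ⟨C', hC'⟩ := Submodule.exists_isCompl AL'
    have frC : Module.finrank F C = Module.finrank F C' := by
      have e1 := Submodule.finrank_sup_add_finrank_inf_eq AL C
      have e2 := Submodule.finrank_sup_add_finrank_inf_eq AL' C'
      rw [hC.sup_eq_top, hC.inf_eq_bot, finrank_top, finrank_bot] at e1
      rw [hC'.sup_eq_top, hC'.inf_eq_bot, finrank_top, finrank_bot] at e2
      have hLtL : Module.finrank F Lt = k := by
        rw [hLt, finrank_comap_subtype hLU, hL]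
      have hLtL' : Module.finrank F Lt' = k := by
        rw [hLt', finrank_comap_subtype hLU', hL']
      have hALr : Module.finrank F AL = Module.finrank F ↥(L ⊓ E) := by
        rw [hAL, finrank_comap_subtype hAtLt, hAt, finrank_comap_subtype hAU]
      have hALr' : Module.finrank F AL' = Module.finrank F ↥(L' ⊓ E) := by
        rw [hAL', finrank_comap_subtype hAtLt', hAt', finrank_comap_subtype hAU']
      omega
    obtain ⟨gL, hgLA, _⟩ := glue_equiv AL C AL' C' hC hC'
      (LinearEquiv.ofFinrankEq _ _ frA) (LinearEquiv.ofFinrankEq _ _ frC)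
    -- D : complement of At inside Et
    obtain ⟨D, hDE, hDA, hDsup⟩ := exists_compl_le At Et hAtEt
    obtain ⟨D', hDE', hDA', hDsup'⟩ := exists_compl_le At' Et' hAtEt'
    -- IsCompl Lt D in U
    have hcomplLD : IsCompl Lt D := by
      constructor
      · rw [disjoint_iff]
        have : Lt ⊓ D ≤ At ⊓ D := by
          refine le_inf ?_ inf_le_right
          refine le_trans (inf_le_inf_left Lt hDE) ?_
          rw [hAt, hLt, hEt, Submodule.comap_inf]
        rw [← le_bot_iff]
        exact this.trans (by rw [inf_comm, hDA])
      · rw [codisjoint_iff]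
        have h1 : Lt ⊔ D = Lt ⊔ Et := by
          conv_rhs => rw [← hDsup, sup_comm D At, ← sup_assoc, sup_eq_left.2 hAtLt]
        rw [h1]
        apply Submodule.map_injective_of_injective injU
        rw [Submodule.map_sup, hLt, hEt, Submodule.map_comap_subtype,
          Submodule.map_comap_subtype, inf_eq_right.2 hLU, inf_eq_right.2 hEU,
          Submodule.map_top, Submodule.range_subtype, hU]
    have hcomplLD' : IsCompl Lt' D' := by
      constructor
      · rw [disjoint_iff]
        have : Lt' ⊓ D' ≤ At' ⊓ D' := by
          refine le_inf ?_ inf_le_right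
          refine le_trans (inf_le_inf_left Lt' hDE') ?_
          rw [hAt', hLt', hEt', Submodule.comap_inf]
        rw [← le_bot_iff]
        exact this.trans (by rw [inf_comm, hDA'])
      · rw [codisjoint_iff]
        have h1 : Lt' ⊔ D' = Lt' ⊔ Et' := by
          conv_rhs => rw [← hDsup', sup_comm D' At', ← sup_assoc, sup_eq_left.2 hAtLt']
        rw [h1]
        apply Submodule.map_injective_of_injective injU'
        rw [Submodule.map_sup, hLt', hEt', Submodule.map_comap_subtype,
          Submodule.map_comap_subtype, inf_eq_right.2 hLU', inf_eq_right.2 hEU',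
          Submodule.map_top, Submodule.range_subtype, hU']
    have frD : Module.finrank F D = Module.finrank F D' := by
      have e1 := Submodule.finrank_sup_add_finrank_inf_eq D At
      have e2 := Submodule.finrank_sup_add_finrank_inf_eq D' At'
      rw [hDsup, hDA, finrank_bot] at e1
      rw [hDsup', hDA', finrank_bot] at e2
      have hEtE : Module.finrank F Et = Module.finrank F E := by
        rw [hEt]; exact finrank_comap_subtype hEU
      have hEtE' : Module.finrank F Et' = Module.finrank F E := by
        rw [hEt']; exact finrank_comap_subtype hEU'
      have hAtr : Module.finrank F At = Module.finrank F ↥(L ⊓ E) := by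
        rw [hAt]; exact finrank_comap_subtype hAU
      have hAtr' : Module.finrank F At' = Module.finrank F ↥(L' ⊓ E) := by
        rw [hAt']; exact finrank_comap_subtype hAU'
      omega
    obtain ⟨gU, hgUL, hgUD⟩ := glue_equiv Lt D Lt' D' hcomplLD hcomplLD'
      gL (LinearEquiv.ofFinrankEq _ _ frD)
    -- W : complement of U in V
    obtain ⟨W, hW⟩ := Submodule.exists_isCompl U
    obtain ⟨W', hW'⟩ := Submodule.exists_isCompl U'
    have frU : Module.finrank F U = Module.finrank F U' := by
      have e1 := Submodule.finrank_sup_add_finrank_inf_eq L E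
      have e2 := Submodule.finrank_sup_add_finrank_inf_eq L' E
      rw [hU, hU']
      omega
    have frW : Module.finrank F W = Module.finrank F W' := by
      have e1 := Submodule.finrank_sup_add_finrank_inf_eq U W
      have e2 := Submodule.finrank_sup_add_finrank_inf_eq U' W'
      rw [hW.sup_eq_top, hW.inf_eq_bot, finrank_bot, finrank_top] at e1
      rw [hW'.sup_eq_top, hW'.inf_eq_bot, finrank_bot, finrank_top] at e2
      omega
    obtain ⟨g, hgU, _⟩ := glue_equiv U W U' W' hW hW' gU (LinearEquiv.ofFinrankEq _ _ frW)
    -- now verify the two image conditions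
    have hmapL : Submodule.map (g : V →ₗ[F] V) L = L' := by
      rw [map_of_comm g gU hgU L hLU]
      have : Submodule.map (gU : U →ₗ[F] U') (L.comap U.subtype) = Lt' :=
        map_of_comm_self gU gL hgUL
      rw [← hLt] at this ⊢
      rw [this, hLt', Submodule.map_comap_subtype, inf_eq_right.2 hLU']
    have hmapAt : Submodule.map (gU : U →ₗ[F] U') At = At' := by
      rw [map_of_comm gU gL hgUL At hAtLt, ← hAL]
      have : Submodule.map (gL : Lt →ₗ[F] Lt') AL = AL' :=
        map_of_comm_self gL _ hgLA
      rw [this, hAL', Submodule.map_comap_subtype, inf_eq_right.2 hAtLt']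
    have hmapE : Submodule.map (g : V →ₗ[F] V) E = E := by
      rw [map_of_comm g gU hgU E hEU, ← hEt, ← hDsup, Submodule.map_sup]
      have hD' : Submodule.map (gU : U →ₗ[F] U') D = D' := map_of_comm_self gU _ hgUD
      rw [hD', hmapAt, hDsup', hEt', Submodule.map_comap_subtype, inf_eq_right.2 hEU']
    exact ⟨g, hmapE, hmapL⟩
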